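/- For every integer n > 0, the sum over all weakly decreasing tuples (λ₁, λ₂, ..., λₙ) of nonnegative integers with λ₁ + λ₂ + ... + λₙ = n of the rational quantity (−1)^(1+λ₁) · C(λ₁,λ₂)·C(λ₂,λ₃)···C(λₙ,0) · ∏_{i=1}^{n} ((2i−1)/i)^{λᵢ} equals |2n−3|!!/n!, where |2n−3|!! is the double factorial of |2n−3| (so the right-hand side is 1 for n = 1 and (2n−3)!!/n! for n ≥ 2). -/

import Mathlib

open Finset PowerSeries

/-- Weakly decreasing tuples `(λ₁,…,λₙ)` of nonnegative integers with `λ₁+⋯+λₙ = n`. -/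
def partitionTuples (n : ℕ) : Finset (Fin n → ℕ) :=
  (Finset.Nat.antidiagonalTuple n n).filter fun t => ∀ i j : Fin n, i ≤ j → t j ≤ t i

/-- The product `C(λ₁,λ₂)·C(λ₂,λ₃)⋯C(λₙ,0)` with the convention `λ_{n+1} = 0`. -/
def binomProd (n : ℕ) (t : Fin n → ℕ) : ℕ :=
  ∏ i : Fin n, Nat.choose (t i) (if h : (i : ℕ) + 1 < n then t ⟨(i : ℕ) + 1, h⟩ else 0)

/-- partial products of weights -/
def Vv (v : ℕ → ℚ) (d : ℕ) : ℚ := ∏ i ∈ range d, v i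

noncomputable def Av (v : ℕ → ℚ) : PowerSeries ℚ := PowerSeries.mk (Vv v)

def shiftw (v : ℕ → ℚ) : ℕ → ℚ := fun i => v (i + 1)

def wfun : ℕ → ℚ := fun i => (2 * i + 1) / (i + 1)

def Wd (d : ℕ) : ℚ := Vv wfun d

lemma Wd_zero : Wd 0 = 1 := by simp [Wd, Vv]

lemma Wd_rec (d : ℕ) : (d + 1 : ℚ) * Wd (d + 1) = (2 * d + 1) * Wd d := by
  have hd : ((d : ℚ) + 1) ≠ 0 := by positivity
  rw [Wd, Wd, Vv, Vv, prod_range_succ]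
  simp only [wfun]
  field_simp

lemma Wd_eq (d : ℕ) : Wd d * (Nat.factorial d : ℚ) = (Nat.doubleFactorial (2 * d - 1) : ℚ) := by
  induction d with
  | zero => simp [Wd_zero]
  | succ d ih =>
    have key : Wd (d+1) * ((d+1).factorial : ℚ) = (2*(d:ℚ)+1) * (Wd d * (d.factorial : ℚ)) := by
      have h := Wd_rec d
      rw [Nat.factorial_succ]
      push_cast
      nlinarith [h]
    have h1 : 2 * (d + 1) - 1 = 2 * d + 1 := by omega
    have h2 : (2 * d + 1).doubleFactorial = (2 * d + 1) * (2 * d - 1).doubleFactorial := by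
      have := Nat.doubleFactorial_add_one (2 * d)
      simpa using this
    rw [key, ih, h1, h2]
    push_cast
    ring

/-- convolution sum -/
def Sconv (m : ℕ) : ℚ := ∑ a ∈ range (m + 1), Wd a * Wd (m - a)

def Tconv (m : ℕ) : ℚ := ∑ a ∈ range (m + 1), (a : ℚ) * (Wd a * Wd (m - a))

lemma Tconv_sym (m : ℕ) : 2 * Tconv m = m * Sconv m := by
  have hrefl : Tconv m = ∑ a ∈ range (m + 1), ((m - a : ℕ) : ℚ) * (Wd (m - a) * Wd a) := by
    rw [Tconv, ← Finset.sum_range_reflect]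
    apply Finset.sum_congr rfl
    intro a ha
    have ha' : a ≤ m := by simpa [Nat.lt_succ_iff] using ha
    simp only [Nat.add_sub_cancel]
    rw [Nat.sub_sub_self ha']
  rw [two_mul]
  nth_rewrite 2 [hrefl]
  rw [Tconv, ← Finset.sum_add_distrib, Sconv, Finset.mul_sum]
  apply Finset.sum_congr rfl
  intro a ha
  have ha' : a ≤ m := by simpa [Nat.lt_succ_iff] using ha
  have : ((m - a : ℕ) : ℚ) = (m : ℚ) - a := by
    push_cast [Nat.cast_sub ha']; ring
  rw [this]
  ring

lemma Tconv_succ (m : ℕ) : Tconv (m + 1) = 2 * Tconv m + Sconv m := by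
  rw [Tconv, Finset.sum_range_succ']
  simp only [Nat.cast_zero, zero_mul, add_zero]
  rw [Tconv, Sconv, Finset.mul_sum, ← Finset.sum_add_distrib]
  apply Finset.sum_congr rfl
  intro a ha
  have h1 : m + 1 - (a + 1) = m - a := by omega
  have h2 : ((a : ℚ) + 1) * Wd (a + 1) = (2 * a + 1) * Wd a := by
    have := Wd_rec a; push_cast at this ⊢; linarith
  rw [h1]
  push_cast
  linear_combination h2 * Wd (m - a)

lemma Sconv_succ (m : ℕ) : Sconv (m + 1) = 2 * Sconv m := by
  have h1 := Tconv_sym (m + 1)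
  have h2 := Tconv_succ m
  have h3 := Tconv_sym m
  have hm : ((m : ℚ) + 1) ≠ 0 := by positivity
  have : ((m : ℚ) + 1) * Sconv (m + 1) = ((m : ℚ) + 1) * (2 * Sconv m) := by
    push_cast at h1
    nlinarith [h1, h2, h3]
  exact mul_left_cancel₀ hm this

lemma Sconv_eq (m : ℕ) : Sconv m = 2 ^ m := by
  induction m with
  | zero => simp [Sconv, Wd_zero]
  | succ m ih => rw [Sconv_succ, ih]; ring

lemma coeff_Av (v : ℕ → ℚ) (m : ℕ) : (coeff m) (Av v) = Vv v m := by
  simp [Av]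

lemma AA_eq (m : ℕ) : (coeff m) (Av wfun * Av wfun) = 2 ^ m := by
  rw [coeff_mul, Finset.Nat.sum_antidiagonal_eq_sum_range_succ_mk]
  rw [← Sconv_eq, Sconv]
  apply Finset.sum_congr rfl
  intro a _
  simp [coeff_Av, Wd]

lemma coeff_sub_two_X (φ : PowerSeries ℚ) (m : ℕ) :
    (coeff m) (φ * (1 - C (2:ℚ) * X)) = (coeff m) φ - 2 * (coeff m) (φ * X) := by
  have : φ * (1 - C (2:ℚ) * X) = φ - C (2:ℚ) * (φ * X) := by ring
  rw [this, map_sub, coeff_C_mul]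

lemma A_mul_B : Av wfun * (Av wfun * (1 - C (2:ℚ) * X)) = 1 := by
  rw [← mul_assoc]
  ext m
  rw [coeff_sub_two_X]
  cases m with
  | zero => simp [coeff_zero_mul_X, AA_eq]
  | succ m =>
    rw [coeff_succ_mul_X, AA_eq, AA_eq, coeff_one]
    simp [pow_succ]
    ring

lemma Vv_succ' (v : ℕ → ℚ) (d : ℕ) : Vv v (d + 1) = v 0 * Vv (shiftw v) d := by
  rw [Vv, Vv, prod_range_succ']
  simp [shiftw, mul_comm]

lemma constantCoeff_Av (v : ℕ → ℚ) : constantCoeff (Av v) = 1 := by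
  rw [← coeff_zero_eq_constantCoeff, coeff_Av]; simp [Vv]

lemma Av_decomp (v : ℕ → ℚ) : Av v = 1 + C (v 0) * X * Av (shiftw v) := by
  ext m
  cases m with
  | zero =>
    rw [map_add, coeff_Av, coeff_one, mul_assoc]
    simp [Vv]
  | succ m =>
    rw [map_add, coeff_one, mul_assoc, coeff_C_mul, coeff_succ_X_mul, coeff_Av, coeff_Av,
      Vv_succ']
    simp

noncomputable def PS : ℕ → ℕ → ℕ → (ℕ → ℚ) → ℚ
  | _k, m, 0, _v => if m = 0 then 1 else 0
  | k, m, r + 1, v => ∑ a ∈ range (m + 1), (k.choose a : ℚ) * v 0 ^ a * PS a (m - a) r (shiftw v)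

lemma PS_zero_left : ∀ (r m : ℕ) (v : ℕ → ℚ), 0 < m → PS 0 m r v = 0 := by
  intro r
  induction r with
  | zero => intro m v hm; simp [PS, Nat.pos_iff_ne_zero.mp hm]
  | succ r ih =>
    intro m v hm
    rw [PS]
    apply Finset.sum_eq_zero
    intro a ha
    rcases Nat.eq_zero_or_pos a with rfl | hA
    · simp [ih m _ hm]
    · simp [Nat.choose_eq_zero_of_lt hA]

lemma coeff_Av_pow (v : ℕ → ℚ) (k m : ℕ) :
    (coeff m) ((Av v) ^ k) =
      ∑ a ∈ range (k + 1), (k.choose a : ℚ) * v 0 ^ a *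
        (if a ≤ m then (coeff (m - a)) ((Av (shiftw v)) ^ a) else 0) := by
  conv_lhs => rw [Av_decomp v, add_comm, add_pow, map_sum]
  apply Finset.sum_congr rfl
  intro a _
  have hx : (C (v 0) * X * Av (shiftw v)) ^ a * 1 ^ (k - a) * ((k.choose a : ℕ) : ℚ⟦X⟧)
      = C ((k.choose a : ℚ) * v 0 ^ a) * ((Av (shiftw v)) ^ a * X ^ a) := by
    rw [one_pow, mul_pow, mul_pow, ← map_pow, ← map_natCast (C (R := ℚ)) (k.choose a), map_mul]
    ring
  rw [hx, coeff_C_mul, coeff_mul_X_pow']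


lemma PS_eq_coeff : ∀ (r k m : ℕ) (v : ℕ → ℚ), m ≤ r →
    PS k m r v = (coeff m) ((Av v) ^ k) := by
  intro r
  induction r with
  | zero =>
    intro k m v hm
    interval_cases m
    rw [PS]
    rw [coeff_zero_eq_constantCoeff, map_pow, constantCoeff_Av]
    simp
  | succ r ih =>
    intro k m v hm
    rw [PS, coeff_Av_pow]
    set f : ℕ → ℚ := fun a => (k.choose a : ℚ) * v 0 ^ a *
        (if a ≤ m then (coeff (m - a)) ((Av (shiftw v)) ^ a) else 0) with hf
    have hterm : ∀ a ∈ range (m + 1),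
        (k.choose a : ℚ) * v 0 ^ a * PS a (m - a) r (shiftw v) = f a := by
      intro a ha
      have ha' : a ≤ m := by simpa [Nat.lt_succ_iff] using ha
      rw [hf]
      simp only [ha', if_true]
      congr 1
      rcases Nat.eq_zero_or_pos a with rfl | hA
      · simp only [Nat.sub_zero]
        rcases Nat.eq_zero_or_pos m with rfl | hM
        · exact ih 0 0 _ (Nat.zero_le r)
        · rw [PS_zero_left _ _ _ hM, pow_zero, coeff_one, if_neg (Nat.pos_iff_ne_zero.mp hM)]
      · exact ih a (m - a) _ (by omega)
    rw [Finset.sum_congr rfl hterm]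
    have hzero : ∀ a, f a ≠ 0 → a ≤ min k m := by
      intro a hA
      rw [hf] at hA
      by_contra hcon
      rcases Nat.lt_or_ge k a with hk | hk
      · simp [Nat.choose_eq_zero_of_lt hk] at hA
      · have : ¬ a ≤ m := by omega
        simp [this] at hA
    have h1 : ∑ a ∈ range (m + 1), f a = ∑ a ∈ range (k + m + 2), f a := by
      apply Finset.sum_subset
      · intro x hx; simp at hx ⊢; omega
      · intro x _ hx
        simp only [Finset.mem_range, Nat.lt_succ_iff, not_le] at hx
        by_contra h
        have := hzero x h
        omega
    have h2 : ∑ a ∈ range (k + 1), f a = ∑ a ∈ range (k + m + 2), f a := by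
      apply Finset.sum_subset
      · intro x hx; simp at hx ⊢; omega
      · intro x _ hx
        simp only [Finset.mem_range, Nat.lt_succ_iff, not_le] at hx
        by_contra h
        have := hzero x h
        omega
    rw [h1, h2]

/-! ## Combinatorial part -/

def Dset (m r : ℕ) : Finset (Fin r → ℕ) :=
  (Finset.Nat.antidiagonalTuple r m).filter fun t => ∀ i j : Fin r, i ≤ j → t j ≤ t i

def headval {r : ℕ} (t : Fin r → ℕ) : ℕ := if h : 0 < r then t ⟨0, h⟩ else 0

def wprod (v : ℕ → ℚ) (r : ℕ) (t : Fin r → ℕ) : ℚ := ∏ i : Fin r, v (i : ℕ) ^ (t i)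

lemma mem_Dset {m r : ℕ} {t : Fin r → ℕ} :
    t ∈ Dset m r ↔ (∑ i, t i = m) ∧ ∀ i j : Fin r, i ≤ j → t j ≤ t i := by
  simp [Dset, Finset.Nat.mem_antidiagonalTuple]

lemma headval_pos {r : ℕ} (h : 0 < r) (t : Fin r → ℕ) : headval t = t ⟨0, h⟩ := dif_pos h

lemma le_headval {r : ℕ} {t : Fin r → ℕ} (hm : ∀ i j : Fin r, i ≤ j → t j ≤ t i) (i : Fin r) :
    t i ≤ headval t := by
  have h : 0 < r := i.pos
  rw [headval_pos h]
  exact hm ⟨0, h⟩ i (Fin.mk_le_of_le_val (Nat.zero_le _))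

lemma Dset_split (m r : ℕ) (F : (Fin (r + 1) → ℕ) → ℚ) :
    ∑ t ∈ Dset m (r + 1), F t =
      ∑ a ∈ range (m + 1),
        ∑ t' ∈ (Dset (m - a) r).filter (fun t' => headval t' ≤ a), F (Fin.cons a t') := by
  rw [← Finset.sum_sigma ((range (m+1))) (fun a => (Dset (m - a) r).filter (fun t' => headval t' ≤ a))
      (fun p => F (Fin.cons p.1 p.2))]
  apply Finset.sum_nbij' (fun t => ⟨t 0, Fin.tail t⟩) (fun p => Fin.cons p.1 p.2)
  · intro t ht
    rw [mem_Dset] at ht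
    obtain ⟨hsum, hmono⟩ := ht
    have hsum' : t 0 + ∑ i : Fin r, Fin.tail t i = m := by
      rw [← hsum, Fin.sum_univ_succ]; rfl
    have h0 : t 0 ≤ m := by omega
    rw [Finset.mem_sigma, Finset.mem_filter, mem_Dset]
    dsimp only
    refine ⟨by simpa [Nat.lt_succ_iff] using h0, ⟨by omega, ?_⟩, ?_⟩
    · intro i j hij
      exact hmono i.succ j.succ (by simpa [Fin.succ_le_succ_iff] using hij)
    · rcases Nat.eq_zero_or_pos r with rfl | hr
      · simp [headval]
      · rw [headval_pos hr]
        exact hmono 0 (⟨0, hr⟩ : Fin r).succ (Fin.zero_le _)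
  · intro p hp
    obtain ⟨a, t'⟩ := p
    rw [Finset.mem_sigma, Finset.mem_filter, mem_Dset] at hp
    dsimp only at hp
    obtain ⟨ha, ⟨⟨hsum, hmono⟩, hhead⟩⟩ := hp
    have ha' : a ≤ m := by simpa [Nat.lt_succ_iff] using ha
    dsimp only
    rw [mem_Dset]
    constructor
    · rw [Fin.sum_cons, hsum]; omega
    · intro i j
      refine Fin.cases (fun hij => ?_) (fun j' hij => ?_) j
      · have hi0 : i = 0 := Fin.le_zero_iff.mp hij
        subst hi0
        exact le_refl _
      · rw [Fin.cons_succ]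
        revert hij
        refine Fin.cases (fun _ => ?_) (fun i' hij' => ?_) i
        · rw [Fin.cons_zero]
          exact le_trans (le_headval hmono j') hhead
        · rw [Fin.cons_succ]
          exact hmono i' j' (Fin.succ_le_succ_iff.mp hij')
  · intro t _; exact Fin.cons_self_tail t
  · intro p _
    obtain ⟨a, t'⟩ := p
    simp [Fin.cons_zero, Fin.tail_cons]
  · intro t _
    rw [Fin.cons_self_tail]

lemma binomProd_cons (r a : ℕ) (t' : Fin r → ℕ) :
    binomProd (r + 1) (Fin.cons a t') = a.choose (headval t') * binomProd r t' := by
  rw [binomProd, binomProd, Fin.prod_univ_succ]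
  simp only [Fin.cons_zero, Fin.cons_succ, Fin.val_zero, Fin.val_succ, zero_add]
  congr 1
  · congr 1
    rcases Nat.eq_zero_or_pos r with rfl | hr
    · simp [headval]
    · rw [headval_pos hr, dif_pos (by omega : 1 < r + 1)]
      have h1 : (⟨1, by omega⟩ : Fin (r + 1)) = (⟨0, hr⟩ : Fin r).succ := rfl
      rw [h1, Fin.cons_succ]
  · apply Finset.prod_congr rfl
    intro i _
    congr 1
    rcases Nat.lt_or_ge ((i : ℕ) + 1) r with h | h
    · rw [dif_pos (by omega : (i : ℕ) + 1 + 1 < r + 1), dif_pos h]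
      have h1 : (⟨(i : ℕ) + 1 + 1, by omega⟩ : Fin (r + 1)) = (⟨(i : ℕ) + 1, h⟩ : Fin r).succ := rfl
      rw [h1, Fin.cons_succ]
    · rw [dif_neg (by omega), dif_neg (by omega)]

lemma wprod_cons (v : ℕ → ℚ) (r a : ℕ) (t' : Fin r → ℕ) :
    wprod v (r + 1) (Fin.cons a t') = v 0 ^ a * wprod (shiftw v) r t' := by
  rw [wprod, wprod, Fin.prod_univ_succ, Fin.cons_zero]
  congr 1

lemma Dset_sum : ∀ (r k m : ℕ) (v : ℕ → ℚ),
    ∑ t ∈ Dset m r, (k.choose (headval t) : ℚ) * (binomProd r t : ℚ) * wprod v r t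
      = PS k m r v := by
  intro r
  induction r with
  | zero =>
    intro k m v
    rcases Nat.eq_zero_or_pos m with rfl | hm
    · rw [PS, if_pos rfl, Dset, Finset.Nat.antidiagonalTuple_zero_zero]
      rw [Finset.filter_true_of_mem (by intro x _; intro i j _; exact absurd i.pos (by simp))]
      rw [Finset.sum_singleton]
      simp [headval, binomProd, wprod]
    · rw [PS, if_neg (by omega), Dset]
      obtain ⟨m', rfl⟩ := Nat.exists_eq_succ_of_ne_zero (by omega : m ≠ 0)
      rw [Finset.Nat.antidiagonalTuple_zero_succ]
      simp
  | succ r ih =>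
    intro k m v
    rw [Dset_split m r, PS]
    apply Finset.sum_congr rfl
    intro a _
    have hterm : ∀ t' ∈ (Dset (m - a) r).filter (fun t' => headval t' ≤ a),
        (k.choose (headval (Fin.cons a t')) : ℚ) * (binomProd (r+1) (Fin.cons a t') : ℚ)
          * wprod v (r+1) (Fin.cons a t')
        = (k.choose a : ℚ) * v 0 ^ a *
            ((a.choose (headval t') : ℚ) * (binomProd r t' : ℚ) * wprod (shiftw v) r t') := by
      intro t' _
      rw [binomProd_cons, wprod_cons]
      have hh : headval (Fin.cons a t') = a := by
        rw [headval_pos (Nat.succ_pos r)]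
        rfl
      rw [hh]
      push_cast
      ring
    rw [Finset.sum_congr rfl hterm, ← Finset.mul_sum]
    congr 1
    rw [← ih a (m - a) (shiftw v)]
    apply Finset.sum_subset (Finset.filter_subset _ _)
    intro t' ht' hnt'
    have : a < headval t' := by
      by_contra h
      exact hnt' (Finset.mem_filter.mpr ⟨ht', by omega⟩)
    rw [Nat.choose_eq_zero_of_lt this]
    simp

lemma wfun_zero : wfun 0 = 1 := by norm_num [wfun]

lemma final_coeff (r : ℕ) :
    2 * Wd r - Wd (r + 1)
      = (Nat.doubleFactorial (2 * ((r:ℤ) + 1) - 3).natAbs : ℚ) / (Nat.factorial (r+1) : ℚ) := by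
  rcases Nat.eq_zero_or_pos r with rfl | hr
  · have h1 : Wd 1 = 1 := by
      rw [Wd, Vv]; simp [wfun_zero]
    norm_num [Wd_zero, h1]
  · obtain ⟨s, rfl⟩ : ∃ s, r = s + 1 := ⟨r - 1, by omega⟩
    have hnat : (2 * (((s + 1 : ℕ) : ℤ) + 1) - 3).natAbs = 2 * s + 1 := by push_cast; omega
    rw [hnat]
    simp only [show s + 1 + 1 = s + 2 from rfl]
    have h1 := Wd_eq (s + 1)
    have h2 := Wd_eq (s + 2)
    have e1 : 2 * (s + 1) - 1 = 2 * s + 1 := by omega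
    have e2 : 2 * (s + 2) - 1 = 2 * s + 1 + 2 := by omega
    rw [e1] at h1
    rw [e2, Nat.doubleFactorial_add_two] at h2
    have hf2 : ((s + 2).factorial : ℚ) ≠ 0 := by positivity
    rw [eq_div_iff hf2]
    have hfs : ((s+2).factorial : ℚ) = ((s:ℚ) + 2) * ((s+1).factorial : ℚ) := by
      rw [show s + 2 = (s + 1) + 1 from rfl, Nat.factorial_succ]
      push_cast; ring
    push_cast at h1 h2 ⊢
    rw [hfs] at h2 ⊢
    nlinarith [h1, h2]

theorem stmt12 (n : ℕ) (hn : 0 < n) :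
    ∑ t ∈ partitionTuples n,
      (-1 : ℚ) ^ (1 + t ⟨0, hn⟩) * (binomProd n t : ℚ) *
        ∏ i : Fin n, ((2 * ((i : ℕ) + 1) - 1 : ℚ) / ((i : ℕ) + 1 : ℚ)) ^ (t i)
      = (Nat.doubleFactorial (2 * (n : ℤ) - 3).natAbs : ℚ) / (Nat.factorial n : ℚ) := by
  obtain ⟨r, rfl⟩ := Nat.exists_eq_succ_of_ne_zero (by omega : n ≠ 0)
  -- replace weight product with wprod
  have hstep1 : ∑ t ∈ partitionTuples (r+1),
      (-1 : ℚ) ^ (1 + t ⟨0, hn⟩) * (binomProd (r+1) t : ℚ) *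
        ∏ i : Fin (r+1), ((2 * ((i : ℕ) + 1) - 1 : ℚ) / ((i : ℕ) + 1 : ℚ)) ^ (t i)
      = ∑ t ∈ Dset (r+1) (r+1),
          (-1 : ℚ) ^ (1 + t ⟨0, hn⟩) * (binomProd (r+1) t : ℚ) * wprod wfun (r+1) t := by
    apply Finset.sum_congr rfl
    intro t _
    congr 1
    rw [wprod]
    apply Finset.prod_congr rfl
    intro i _
    congr 1
    rw [wfun]
    congr 1
    ring
  rw [hstep1, Dset_split (r+1) r]
  -- inner sums
  set v' : ℕ → ℚ := shiftw wfun with hv'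
  have hstep2 : ∀ a ∈ range (r + 1 + 1),
      (∑ t' ∈ (Dset (r + 1 - a) r).filter (fun t' => headval t' ≤ a),
        (-1 : ℚ) ^ (1 + (Fin.cons a t' : Fin (r+1) → ℕ) ⟨0, hn⟩) * (binomProd (r+1) (Fin.cons a t') : ℚ) *
          wprod wfun (r+1) (Fin.cons a t'))
      = (-1 : ℚ) ^ (1 + a) * PS a (r + 1 - a) r v' := by
    intro a _
    have hterm : ∀ t' ∈ (Dset (r + 1 - a) r).filter (fun t' => headval t' ≤ a),
        (-1 : ℚ) ^ (1 + (Fin.cons a t' : Fin (r+1) → ℕ) ⟨0, hn⟩) * (binomProd (r+1) (Fin.cons a t') : ℚ) *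
          wprod wfun (r+1) (Fin.cons a t')
        = (-1 : ℚ) ^ (1 + a) *
            ((a.choose (headval t') : ℚ) * (binomProd r t' : ℚ) * wprod v' r t') := by
      intro t' _
      rw [binomProd_cons, wprod_cons, wfun_zero]
      have hc : (Fin.cons a t' : Fin (r+1) → ℕ) (⟨0, hn⟩ : Fin (r+1)) = a := rfl
      rw [hc]
      push_cast
      ring
    rw [Finset.sum_congr rfl hterm, ← Finset.mul_sum]
    congr 1
    rw [← Dset_sum r a (r + 1 - a) v']
    apply Finset.sum_subset (Finset.filter_subset _ _)
    intro t' ht' hnt'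
    have hlt : a < headval t' := by
      by_contra h
      exact hnt' (Finset.mem_filter.mpr ⟨ht', by omega⟩)
    rw [Nat.choose_eq_zero_of_lt hlt]
    simp
  rw [Finset.sum_congr rfl hstep2]
  -- power series
  set A : PowerSeries ℚ := Av wfun with hA
  set A' : PowerSeries ℚ := Av v' with hA'
  have hdecomp : A = 1 + X * A' := by
    rw [hA, Av_decomp wfun, wfun_zero, map_one, one_mul, hA']
  set G : PowerSeries ℚ := X * A' with hG
  have hstep3 : ∀ a ∈ range (r + 1 + 1),
      (-1 : ℚ) ^ (1 + a) * PS a (r + 1 - a) r v' = -(coeff (r+1)) ((-G) ^ a) := by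
    intro a ha
    have ha' : a ≤ r + 1 := by simpa [Nat.lt_succ_iff] using ha
    have hGpow : (-G) ^ a = C ((-1 : ℚ)^a) * (A' ^ a * X ^ a) := by
      rw [map_pow, map_neg, map_one, hG]
      ring
    rw [hGpow, coeff_C_mul, coeff_mul_X_pow', if_pos ha']
    rcases Nat.eq_zero_or_pos a with rfl | hapos
    · simp only [Nat.sub_zero]
      rw [PS_zero_left r (r+1) v' (Nat.succ_pos r)]
      simp
    · rw [PS_eq_coeff r a (r + 1 - a) v' (by omega)]
      ring
  rw [Finset.sum_congr rfl hstep3, Finset.sum_neg_distrib]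
  rw [← map_sum]
  -- geometric sum
  set S : PowerSeries ℚ := ∑ a ∈ range (r + 1 + 1), (-G) ^ a with hS
  set Bs : PowerSeries ℚ := A * (1 - C (2:ℚ) * X) with hBs
  have hAB : A * Bs = 1 := A_mul_B
  have hAS : A * S = 1 - (-G) ^ (r + 1 + 1) := by
    have := geom_sum_mul (-G) (r + 1 + 1)
    have h2 : (-G - 1) = -A := by rw [hdecomp]; ring
    rw [h2] at this
    linear_combination (-1 : PowerSeries ℚ) * this
  have hAne : A ≠ 0 := by
    intro h
    have := hAB
    rw [h, zero_mul] at this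
    exact zero_ne_one this
  have hSeq : S = Bs * (1 - (-G) ^ (r + 1 + 1)) := by
    refine mul_left_cancel₀ hAne ?_
    rw [← mul_assoc, hAB, one_mul, hAS]
  rw [hSeq]
  have hzero : (coeff (r+1)) (Bs * (-G) ^ (r+1+1)) = 0 := by
    have hexp : Bs * (-G) ^ (r+1+1)
        = (Bs * C ((-1 : ℚ) ^ (r+1+1)) * A' ^ (r+1+1)) * X ^ (r+1+1) := by
      rw [map_pow, map_neg, map_one, hG]
      ring
    rw [hexp, coeff_mul_X_pow', if_neg (by omega)]
  have hBsplit : (coeff (r+1)) (Bs * (1 - (-G) ^ (r+1+1))) = (coeff (r+1)) Bs := by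
    rw [mul_sub, mul_one, map_sub, hzero, sub_zero]
  rw [hBsplit]
  have hcB : (coeff (r+1)) Bs = Wd (r+1) - 2 * Wd r := by
    rw [hBs, coeff_sub_two_X, coeff_succ_mul_X, hA, coeff_Av, coeff_Av]
    rfl
  rw [hcB]
  have hfin := final_coeff r
  push_cast at hfin ⊢
  linarith
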